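/- Under the hypotheses of the mean-field Lindblad equation with faithful initial state m_0, one has sup_{0≤t≤T} ‖log m_t‖ ≤ −log λ_min(m_0) + ‖L‖² T. -/

import Mathlib

open Matrix Kronecker
open scoped ComplexOrder

/-- Partial trace over the second tensor factor, `tr₂(A ⊗ B) = tr(B)·A`. -/
noncomputable def ptrace2 {n : ℕ} (M : Matrix (Fin n × Fin n) (Fin n × Fin n) ℂ) :
    Matrix (Fin n) (Fin n) ℂ :=
  Matrix.of fun i j => ∑ k : Fin n, M (i, k) (j, k)

/-- The mean-field interaction `A^σ = tr₂((1⊗σ)A)`. -/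
noncomputable def meanField {n : ℕ} (A : Matrix (Fin n × Fin n) (Fin n × Fin n) ℂ)
    (σ : Matrix (Fin n) (Fin n) ℂ) : Matrix (Fin n) (Fin n) ℂ :=
  ptrace2 (((1 : Matrix (Fin n) (Fin n) ℂ) ⊗ₖ σ) * A)

/-- Right-hand side of the mean-field Lindblad equation
`−i[H̃ + A^m, m] + L m L† − (1/2){L†L, m}`. -/
noncomputable def lindRHS {n : ℕ} (H L : Matrix (Fin n) (Fin n) ℂ)
    (A : Matrix (Fin n × Fin n) (Fin n × Fin n) ℂ)
    (m : Matrix (Fin n) (Fin n) ℂ) : Matrix (Fin n) (Fin n) ℂ :=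
  (-Complex.I) • ((H + meanField A m) * m - m * (H + meanField A m))
    + L * m * Lᴴ - (1 / 2 : ℂ) • (Lᴴ * L * m + m * (Lᴴ * L))

/-- The smallest eigenvalue of a Hermitian matrix (junk value `0` otherwise). -/
noncomputable def lamMin {n : ℕ} (M : Matrix (Fin n) (Fin n) ℂ) : ℝ :=
  if h : M.IsHermitian then ⨅ i, h.eigenvalues i else 0

/-- The operator norm (2→2 norm) of a matrix. -/
noncomputable def opNorm {m : Type*} [Fintype m] [DecidableEq m] (M : Matrix m m ℂ) : ℝ :=
  ‖Matrix.toEuclideanCLM (𝕜 := ℂ) M‖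

/-- Matrix logarithm of a Hermitian matrix via the continuous functional calculus. -/
noncomputable def mlog {n : ℕ} (M : Matrix (Fin n) (Fin n) ℂ) : Matrix (Fin n) (Fin n) ℂ :=
  cfc Real.log M


open Matrix

namespace LB
variable {n : ℕ}

noncomputable def sqn (v : Fin n → ℂ) : ℝ := ∑ i, Complex.normSq (v i)

noncomputable def qf (M : Matrix (Fin n) (Fin n) ℂ) (v : Fin n → ℂ) : ℝ :=
  (star v ⬝ᵥ (M *ᵥ v)).re

lemma sqn_nonneg (v : Fin n → ℂ) : 0 ≤ sqn v :=
  Finset.sum_nonneg fun _ _ => Complex.normSq_nonneg _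

lemma dot_star_self (v : Fin n → ℂ) : star v ⬝ᵥ v = (sqn v : ℝ) := by
  simp [dotProduct, sqn, ← Complex.normSq_eq_conj_mul_self]

lemma dot_preserve (U : Matrix (Fin n) (Fin n) ℂ) (hU : Uᴴ * U = 1) (v : Fin n → ℂ) :
    star (U *ᵥ v) ⬝ᵥ (U *ᵥ v) = star v ⬝ᵥ v := by
  rw [star_mulVec, dotProduct_mulVec, vecMul_vecMul, hU, vecMul_one]



lemma qf_expand {M : Matrix (Fin n) (Fin n) ℂ} (hM : M.IsHermitian) (v : Fin n → ℂ) :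
    star v ⬝ᵥ (M *ᵥ v) =
      ((∑ i, hM.eigenvalues i *
        Complex.normSq ((star (hM.eigenvectorUnitary : Matrix (Fin n) (Fin n) ℂ) *ᵥ v) i) : ℝ) : ℂ) := by
  set U : Matrix (Fin n) (Fin n) ℂ := (hM.eigenvectorUnitary : Matrix (Fin n) (Fin n) ℂ) with hUdef
  set w := star U *ᵥ v with hw
  have h1 : star v ᵥ* U = star w := by
    rw [hw, star_mulVec, star_eq_conjTranspose U, conjTranspose_conjTranspose]
  conv_lhs => rw [hM.spectral_theorem]
  rw [Unitary.conjStarAlgAut_apply, ← hUdef]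
  rw [← mulVec_mulVec, ← mulVec_mulVec, ← hw, dotProduct_mulVec, h1, dotProduct]
  push_cast
  refine Finset.sum_congr rfl fun i _ => ?_
  rw [mulVec_diagonal]
  simp only [Pi.star_apply, RCLike.star_def, Function.comp_apply, RCLike.ofReal_alg, Complex.real_smul, mul_one]
  rw [Complex.normSq_eq_conj_mul_self]
  push_cast
  ring

lemma sqn_star_mulVec {M : Matrix (Fin n) (Fin n) ℂ} (hM : M.IsHermitian) (v : Fin n → ℂ) :
    sqn ((star (hM.eigenvectorUnitary : Matrix (Fin n) (Fin n) ℂ)) *ᵥ v) = sqn v := by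
  have hU : (star (hM.eigenvectorUnitary : Matrix (Fin n) (Fin n) ℂ))ᴴ *
      (star (hM.eigenvectorUnitary : Matrix (Fin n) (Fin n) ℂ)) = 1 := by
    rw [← star_eq_conjTranspose, star_star]
    exact (Matrix.mem_unitaryGroup_iff).mp hM.eigenvectorUnitary.2
  have h := dot_preserve _ hU v
  rw [dot_star_self, dot_star_self] at h
  exact_mod_cast h

lemma lamMin_le_eig {M : Matrix (Fin n) (Fin n) ℂ} (hM : M.IsHermitian) (i : Fin n) :
    lamMin M ≤ hM.eigenvalues i := by
  rw [lamMin, dif_pos hM]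
  exact ciInf_le (Set.Finite.bddBelow (Set.finite_range _)) i

lemma rayleigh_ge {M : Matrix (Fin n) (Fin n) ℂ} (hM : M.IsHermitian) (v : Fin n → ℂ) :
    lamMin M * sqn v ≤ qf M v := by
  have he := qf_expand hM v
  have h2 : qf M v = ∑ i, hM.eigenvalues i *
      Complex.normSq ((star (hM.eigenvectorUnitary : Matrix (Fin n) (Fin n) ℂ) *ᵥ v) i) := by
    rw [qf, he, Complex.ofReal_re]
  rw [h2, ← sqn_star_mulVec hM v, sqn, Finset.mul_sum]
  exact Finset.sum_le_sum fun i _ =>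
    mul_le_mul_of_nonneg_right (lamMin_le_eig hM i) (Complex.normSq_nonneg _)

lemma sqn_coe_basis {M : Matrix (Fin n) (Fin n) ℂ} (hM : M.IsHermitian) (i : Fin n) :
    sqn ⇑(hM.eigenvectorBasis i) = 1 := by
  have hnorm : ‖hM.eigenvectorBasis i‖ = 1 := hM.eigenvectorBasis.orthonormal.1 i
  have h2 : ‖hM.eigenvectorBasis i‖ ^ 2 = sqn ⇑(hM.eigenvectorBasis i) := by
    rw [EuclideanSpace.norm_eq, Real.sq_sqrt (by positivity)]
    simp [sqn, Complex.normSq_eq_norm_sq]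
  rw [← h2, hnorm, one_pow]

lemma exists_eigvec (hn : 0 < n) {M : Matrix (Fin n) (Fin n) ℂ} (hM : M.IsHermitian) :
    ∃ v : Fin n → ℂ, sqn v = 1 ∧ M *ᵥ v = (lamMin M : ℂ) • v := by
  have : Nonempty (Fin n) := ⟨⟨0, hn⟩⟩
  obtain ⟨i₀, hi₀⟩ := Finite.exists_min hM.eigenvalues
  have hmin : lamMin M = hM.eigenvalues i₀ := by
    refine le_antisymm (lamMin_le_eig hM i₀) ?_
    rw [lamMin, dif_pos hM]
    exact le_ciInf hi₀
  refine ⟨⇑(hM.eigenvectorBasis i₀), sqn_coe_basis hM i₀, ?_⟩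
  rw [hmin, hM.mulVec_eigenvectorBasis i₀]
  ext j
  simp [Complex.real_smul]

lemma qf_eigvec {M : Matrix (Fin n) (Fin n) ℂ} {v : Fin n → ℂ} {lam : ℝ}
    (hv : sqn v = 1) (hev : M *ᵥ v = (lam : ℂ) • v) : qf M v = lam := by
  rw [qf, hev, dotProduct_smul, dot_star_self, hv, smul_eq_mul]
  simp

noncomputable def S (N : Matrix (Fin n) (Fin n) ℂ) : ℝ := ∑ i, ∑ j, ‖N i j‖

lemma abs_entry_le {v : Fin n → ℂ} (hv : sqn v = 1) (i : Fin n) : ‖v i‖ ≤ 1 := by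
  have h1 : Complex.normSq (v i) ≤ 1 := by
    rw [← hv]
    exact Finset.single_le_sum (f := fun j => Complex.normSq (v j))
      (fun j _ => Complex.normSq_nonneg _) (Finset.mem_univ i)
  rw [← Complex.sq_norm] at h1
  nlinarith [norm_nonneg (v i)]

lemma qf_abs_le {v : Fin n → ℂ} (hv : sqn v = 1) (N : Matrix (Fin n) (Fin n) ℂ) :
    |qf N v| ≤ S N := by
  rw [qf]
  refine le_trans (Complex.abs_re_le_norm _) ?_
  rw [dotProduct, S]
  refine le_trans (norm_sum_le _ _) (Finset.sum_le_sum fun i _ => ?_)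
  have h1 : ‖star v i * (N *ᵥ v) i‖ =
      ‖v i‖ * ‖(N *ᵥ v) i‖ := by
    rw [norm_mul, Pi.star_apply, RCLike.star_def, Complex.norm_conj]
  rw [h1]
  have h2 : ‖(N *ᵥ v) i‖ ≤ ∑ j, ‖N i j‖ := by
    rw [mulVec, dotProduct]
    refine le_trans (norm_sum_le _ _) (Finset.sum_le_sum fun j _ => ?_)
    rw [norm_mul]
    exact mul_le_of_le_one_right (norm_nonneg _) (abs_entry_le hv j)
  calc ‖v i‖ * ‖(N *ᵥ v) i‖
      ≤ 1 * (∑ j, ‖N i j‖) :=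
        mul_le_mul (abs_entry_le hv i) h2 (norm_nonneg _) zero_le_one
    _ = _ := one_mul _

lemma lamMin_lip (hn : 0 < n) {M N : Matrix (Fin n) (Fin n) ℂ} (hM : M.IsHermitian)
    (hN : N.IsHermitian) : lamMin N ≤ lamMin M + S (N - M) := by
  obtain ⟨v, hv1, hev⟩ := exists_eigvec hn hM
  have h1 : lamMin N ≤ qf N v := by
    have := rayleigh_ge hN v; rwa [hv1, mul_one] at this
  have h2 : qf (N - M) v = qf N v - qf M v := by
    rw [qf, qf, qf, sub_mulVec, dotProduct_sub, Complex.sub_re]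
  have h3 := qf_abs_le hv1 (N - M)
  have h4 : qf M v = lamMin M := qf_eigvec hv1 hev
  have := abs_le.mp h3
  linarith

lemma norm_symm_eq (v : Fin n → ℂ) :
    ‖(WithLp.equiv 2 (Fin n → ℂ)).symm v‖ = Real.sqrt (sqn v) := by
  rw [EuclideanSpace.norm_eq]
  congr 1
  refine Finset.sum_congr rfl fun i _ => ?_
  rw [Complex.sq_norm]; rfl

lemma clm_apply_symm (M : Matrix (Fin n) (Fin n) ℂ) (v : Fin n → ℂ) :
    (toEuclideanCLM (𝕜 := ℂ) (n := Fin n) M) ((WithLp.equiv 2 (Fin n → ℂ)).symm v) =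
      (WithLp.equiv 2 (Fin n → ℂ)).symm (M *ᵥ v) := by
  exact Matrix.toEuclideanCLM_toLp M v

lemma clm_apply_eq (M : Matrix (Fin n) (Fin n) ℂ) (x : EuclideanSpace ℂ (Fin n)) :
    (toEuclideanCLM (𝕜 := ℂ) (n := Fin n) M) x =
      (WithLp.equiv 2 (Fin n → ℂ)).symm (M *ᵥ (WithLp.equiv 2 (Fin n → ℂ) x)) := rfl

lemma norm_eq_sqrt_sqn (x : EuclideanSpace ℂ (Fin n)) :
    ‖x‖ = Real.sqrt (sqn (WithLp.equiv 2 (Fin n → ℂ) x)) := by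
  rw [EuclideanSpace.norm_eq]
  congr 1
  simp only [sqn]
  exact Finset.sum_congr rfl fun i _ => by rw [Complex.sq_norm]; rfl

lemma opNorm_le_of_sqn {M : Matrix (Fin n) (Fin n) ℂ} {C : ℝ} (hC : 0 ≤ C)
    (h : ∀ v : Fin n → ℂ, sqn (M *ᵥ v) ≤ C ^ 2 * sqn v) : opNorm M ≤ C := by
  unfold opNorm
  refine ContinuousLinearMap.opNorm_le_bound _ hC fun x => ?_
  rw [clm_apply_eq, norm_symm_eq, norm_eq_sqrt_sqn x, ← Real.sqrt_sq hC,
    ← Real.sqrt_mul (by positivity)]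
  exact Real.sqrt_le_sqrt (h _)

lemma sqn_mulVec_le (M : Matrix (Fin n) (Fin n) ℂ) (v : Fin n → ℂ) :
    sqn (M *ᵥ v) ≤ opNorm M ^ 2 * sqn v := by
  have h := (toEuclideanCLM (𝕜 := ℂ) (n := Fin n) M).le_opNorm
    ((WithLp.equiv 2 (Fin n → ℂ)).symm v)
  rw [clm_apply_symm, norm_symm_eq, norm_symm_eq] at h
  have h1 : (0:ℝ) ≤ opNorm M := norm_nonneg _
  have e1 := Real.sq_sqrt (sqn_nonneg (M *ᵥ v))
  have e2 := Real.sq_sqrt (sqn_nonneg v)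
  have e3 := Real.sqrt_nonneg (sqn (M *ᵥ v))
  have e4 := Real.sqrt_nonneg (sqn v)
  have h' : Real.sqrt (sqn (M *ᵥ v)) ≤ opNorm M * Real.sqrt (sqn v) := h
  nlinarith

lemma trace_eq_sum_eigs {M : Matrix (Fin n) (Fin n) ℂ} (hM : M.IsHermitian) :
    M.trace = ((∑ i, hM.eigenvalues i : ℝ) : ℂ) := by
  conv_lhs => rw [hM.spectral_theorem]
  rw [Unitary.conjStarAlgAut_apply]
  rw [Matrix.trace_mul_cycle, Matrix.mem_unitaryGroup_iff'.mp hM.eigenvectorUnitary.2, one_mul,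
    Matrix.trace_diagonal]
  push_cast
  rfl

lemma herm_dot {M : Matrix (Fin n) (Fin n) ℂ} (hM : M.IsHermitian) {v : Fin n → ℂ} {lam : ℝ}
    (hev : M *ᵥ v = (lam:ℂ) • v) (w : Fin n → ℂ) :
    star v ⬝ᵥ (M *ᵥ w) = (lam:ℂ) * (star v ⬝ᵥ w) := by
  rw [dotProduct_mulVec]
  have h1 : star v ᵥ* M = (lam:ℂ) • star v := by
    conv_lhs => rw [← hM.eq]
    rw [← star_mulVec, hev, star_smul]
    congr 1
    simp [Complex.conj_ofReal]
  rw [h1, smul_dotProduct, smul_eq_mul]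

lemma dot_L (Lm : Matrix (Fin n) (Fin n) ℂ) (v x : Fin n → ℂ) :
    star v ⬝ᵥ (Lm *ᵥ x) = star (Lmᴴ *ᵥ v) ⬝ᵥ x := by
  rw [dotProduct_mulVec, star_mulVec, conjTranspose_conjTranspose]

set_option maxHeartbeats 2000000 in
lemma rhs_key (Hm Lm : Matrix (Fin n) (Fin n) ℂ)
    (Am : Matrix (Fin n × Fin n) (Fin n × Fin n) ℂ)
    {M : Matrix (Fin n) (Fin n) ℂ} (hM : M.IsHermitian)
    {v : Fin n → ℂ} {lam : ℝ} (hlam : 0 ≤ lam) (hv : sqn v = 1)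
    (hev : M *ᵥ v = (lam:ℂ) • v)
    (hpsd : ∀ w : Fin n → ℂ, 0 ≤ (star w ⬝ᵥ (M *ᵥ w)).re) :
    -(lam * opNorm Lm ^ 2) ≤ (star v ⬝ᵥ (lindRHS Hm Lm Am M *ᵥ v)).re := by
  have e0 : ∀ B : Matrix (Fin n) (Fin n) ℂ, star v ⬝ᵥ ((B * M - M * B) *ᵥ v) = 0 := fun B => by
    rw [sub_mulVec, dotProduct_sub, ← mulVec_mulVec, ← mulVec_mulVec, hev, mulVec_smul,
      dotProduct_smul, herm_dot hM hev (B *ᵥ v), smul_eq_mul, sub_self]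
  have e2 : star v ⬝ᵥ ((Lm * M * Lmᴴ) *ᵥ v) = star (Lmᴴ *ᵥ v) ⬝ᵥ (M *ᵥ (Lmᴴ *ᵥ v)) := by
    rw [← mulVec_mulVec, ← mulVec_mulVec, dot_L]
  have e3 : star v ⬝ᵥ ((Lmᴴ * Lm * M) *ᵥ v) = (lam:ℂ) * (sqn (Lm *ᵥ v) : ℝ) := by
    rw [← mulVec_mulVec, hev, mulVec_smul, dotProduct_smul, smul_eq_mul]
    congr 1
    rw [← mulVec_mulVec, dot_L, conjTranspose_conjTranspose, dot_star_self]
  have e4 : star v ⬝ᵥ ((M * (Lmᴴ * Lm)) *ᵥ v) = (lam:ℂ) * (sqn (Lm *ᵥ v) : ℝ) := by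
    rw [← mulVec_mulVec, herm_dot hM hev]
    congr 1
    rw [← mulVec_mulVec, dot_L, conjTranspose_conjTranspose, dot_star_self]
  have expand : star v ⬝ᵥ (lindRHS Hm Lm Am M *ᵥ v)
      = star (Lmᴴ *ᵥ v) ⬝ᵥ (M *ᵥ (Lmᴴ *ᵥ v)) - ((lam * sqn (Lm *ᵥ v) : ℝ) : ℂ) := by
    rw [lindRHS, sub_mulVec, add_mulVec, smul_mulVec, smul_mulVec,
      dotProduct_sub, dotProduct_add, dotProduct_smul, dotProduct_smul,
      e0 (Hm + meanField Am M), e2, add_mulVec, dotProduct_add, e3, e4, smul_eq_mul,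
      smul_eq_mul]
    push_cast
    ring
  have hre := congrArg Complex.re expand
  rw [Complex.sub_re, Complex.ofReal_re] at hre
  have h5 : sqn (Lm *ᵥ v) ≤ opNorm Lm ^ 2 := by
    have := sqn_mulVec_le Lm v
    rwa [hv, mul_one] at this
  have h6 := hpsd (Lmᴴ *ᵥ v)
  have h7 : lam * sqn (Lm *ᵥ v) ≤ lam * opNorm Lm ^ 2 :=
    mul_le_mul_of_nonneg_left h5 hlam
  rw [hre]
  linarith

lemma sqn_unitary {U : Matrix (Fin n) (Fin n) ℂ} (hU : Uᴴ * U = 1) (x : Fin n → ℂ) :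
    sqn (U *ᵥ x) = sqn x := by
  have h := dot_preserve U hU x
  rw [dot_star_self, dot_star_self] at h
  exact_mod_cast h

lemma hasDerivAt_dot {m : ℝ → Matrix (Fin n) (Fin n) ℂ} {t : ℝ}
    {D : Matrix (Fin n) (Fin n) ℂ}
    (hd : ∀ i j, HasDerivAt (fun u => m u i j) (D i j) t) (v : Fin n → ℂ) :
    HasDerivAt (fun u => (star v ⬝ᵥ (m u *ᵥ v)).re) ((star v ⬝ᵥ (D *ᵥ v)).re) t := by
  have e : ∀ (N : Matrix (Fin n) (Fin n) ℂ),
      star v ⬝ᵥ (N *ᵥ v) = ∑ p : Fin n × Fin n, star v p.1 * (N p.1 p.2 * v p.2) := by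
    intro N
    rw [Fintype.sum_prod_type]
    simp [dotProduct, mulVec, Finset.mul_sum]
  have h1 : HasDerivAt (fun u => star v ⬝ᵥ (m u *ᵥ v)) (star v ⬝ᵥ (D *ᵥ v)) t := by
    simp_rw [e]
    exact HasDerivAt.fun_sum fun p _ => ((hd p.1 p.2).mul_const (v p.2)).const_mul (star v p.1)
  exact Complex.reCLM.hasFDerivAt.comp_hasDerivAt t h1

lemma lamMin_pos (hn : 0 < n) {M : Matrix (Fin n) (Fin n) ℂ} (hd : M.PosDef) :
    0 < lamMin M := by
  have : Nonempty (Fin n) := ⟨⟨0, hn⟩⟩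
  obtain ⟨i₀, hi₀⟩ := Finite.exists_min hd.1.eigenvalues
  have hmin : lamMin M = hd.1.eigenvalues i₀ := by
    refine le_antisymm (lamMin_le_eig hd.1 i₀) ?_
    rw [lamMin, dif_pos hd.1]
    exact le_ciInf hi₀
  rw [hmin]
  exact hd.eigenvalues_pos i₀

lemma eig_le_one {M : Matrix (Fin n) (Fin n) ℂ} (hM : M.IsHermitian) (htr : M.trace = 1)
    (hpos : ∀ i, 0 < hM.eigenvalues i) (i : Fin n) : hM.eigenvalues i ≤ 1 := by
  have hs : (∑ j, hM.eigenvalues j : ℝ) = 1 := by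
    have h := trace_eq_sum_eigs hM
    rw [htr] at h
    exact_mod_cast h.symm
  rw [← hs]
  exact Finset.single_le_sum (fun j _ => (hpos j).le) (Finset.mem_univ i)

lemma opNorm_cfc_le {M : Matrix (Fin n) (Fin n) ℂ} (hM : M.IsHermitian) {C : ℝ} (hC : 0 ≤ C)
    (f : ℝ → ℝ) (hf : ∀ i, |f (hM.eigenvalues i)| ≤ C) : opNorm (cfc f M) ≤ C := by
  rw [hM.cfc_eq, Matrix.IsHermitian.cfc]
  apply opNorm_le_of_sqn hC
  intro v
  have hUU : (hM.eigenvectorUnitary : Matrix (Fin n) (Fin n) ℂ)ᴴ *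
      (hM.eigenvectorUnitary : Matrix (Fin n) (Fin n) ℂ) = 1 := by
    rw [← star_eq_conjTranspose]
    exact Matrix.mem_unitaryGroup_iff'.mp hM.eigenvectorUnitary.2
  rw [Unitary.conjStarAlgAut_apply]
  rw [← mulVec_mulVec, ← mulVec_mulVec, sqn_unitary hUU, ← sqn_star_mulVec hM v]
  set w := star (hM.eigenvectorUnitary : Matrix (Fin n) (Fin n) ℂ) *ᵥ v with hw
  rw [sqn, sqn, Finset.mul_sum]
  refine Finset.sum_le_sum fun i _ => ?_
  rw [mulVec_diagonal]
  rw [Complex.normSq_mul]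
  have h1 : Complex.normSq ((RCLike.ofReal ∘ f ∘ hM.eigenvalues) i) = f (hM.eigenvalues i) ^ 2 := by
    simp [Function.comp_apply, Complex.normSq_ofReal, sq]
  rw [h1]
  have h4 : f (hM.eigenvalues i) ^ 2 ≤ C ^ 2 := by
    rw [← sq_abs]
    exact pow_le_pow_left₀ (abs_nonneg _) (hf i) 2
  exact mul_le_mul_of_nonneg_right h4 (Complex.normSq_nonneg (w i))

end LB

open LB in
set_option maxHeartbeats 1000000 in
theorem lindblad_log_bound {n : ℕ} (hn : 0 < n) (T : ℝ) (hT : 0 ≤ T)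
    (H L : Matrix (Fin n) (Fin n) ℂ) (hH : H.IsHermitian)
    (A : Matrix (Fin n × Fin n) (Fin n × Fin n) ℂ) (hA : A.IsHermitian)
    (m : ℝ → Matrix (Fin n) (Fin n) ℂ)
    (hderiv : ∀ t ∈ Set.Icc 0 T, ∀ i j : Fin n,
      HasDerivAt (fun u => m u i j) ((lindRHS H L A (m t)) i j) t)
    (hherm : ∀ t ∈ Set.Icc 0 T, (m t).IsHermitian)
    (htrace : ∀ t ∈ Set.Icc 0 T, (m t).trace = 1)
    (h0 : (m 0).PosDef) :
    ∀ t ∈ Set.Icc 0 T,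
      opNorm (mlog (m t)) ≤ -Real.log (lamMin (m 0)) + (opNorm L) ^ 2 * T := by
  have h0T : (0:ℝ) ∈ Set.Icc (0:ℝ) T := ⟨le_refl 0, hT⟩
  have hherm0 : (m 0).IsHermitian := hherm 0 h0T
  set c : ℝ := opNorm L ^ 2 with hc
  have hc0 : (0:ℝ) ≤ c := sq_nonneg _
  set lam0 : ℝ := lamMin (m 0) with hlam0
  have hlam0pos : 0 < lam0 := lamMin_pos hn h0
  have heig0pos : ∀ i, 0 < hherm0.eigenvalues i := fun i => h0.eigenvalues_pos i
  have hlam0le1 : lam0 ≤ 1 :=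
    le_trans (lamMin_le_eig hherm0 ⟨0, hn⟩)
      (eig_le_one hherm0 (htrace 0 h0T) heig0pos ⟨0, hn⟩)
  -- continuity of ψ = lamMin ∘ m within Icc
  have hψc : ∀ t₀ ∈ Set.Icc (0:ℝ) T, Filter.Tendsto (fun u => lamMin (m u))
      (nhdsWithin t₀ (Set.Icc 0 T)) (nhds (lamMin (m t₀))) := by
    intro t₀ ht₀
    have hScont : Filter.Tendsto (fun u => S (m u - m t₀)) (nhdsWithin t₀ (Set.Icc 0 T))
        (nhds 0) := by
      have h1 : Filter.Tendsto (fun u => S (m u - m t₀)) (nhds t₀) (nhds (S (m t₀ - m t₀))) := by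
        unfold S
        apply tendsto_finset_sum
        intro i _
        apply tendsto_finset_sum
        intro j _
        have hij : ContinuousAt (fun u => m u i j) t₀ := (hderiv t₀ ht₀ i j).continuousAt
        have h5 : Filter.Tendsto (fun u => m u i j - m t₀ i j) (nhds t₀)
            (nhds (m t₀ i j - m t₀ i j)) := hij.sub continuousAt_const
        rw [sub_self] at h5
        have h6 := (continuous_norm.tendsto 0).comp h5
        simpa [Matrix.sub_apply, Function.comp_def] using h6
      have h2 : S (m t₀ - m t₀) = 0 := by simp [S]
      rw [h2] at h1
      exact h1.mono_left nhdsWithin_le_nhds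
    have hb : ∀ᶠ u in nhdsWithin t₀ (Set.Icc 0 T),
        |lamMin (m u) - lamMin (m t₀)| ≤ S (m u - m t₀) := by
      filter_upwards [self_mem_nhdsWithin] with u hu
      have h1 := lamMin_lip hn (hherm t₀ ht₀) (hherm u hu)
      have h2 := lamMin_lip hn (hherm u hu) (hherm t₀ ht₀)
      have hS : S (m t₀ - m u) = S (m u - m t₀) := by
        unfold S
        refine Finset.sum_congr rfl fun i _ => Finset.sum_congr rfl fun j _ => ?_
        rw [Matrix.sub_apply, Matrix.sub_apply, ← norm_neg, neg_sub]
      rw [hS] at h2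
      rw [abs_le]
      constructor <;> linarith
    have h3 : Filter.Tendsto (fun u => lamMin (m u) - lamMin (m t₀))
        (nhdsWithin t₀ (Set.Icc 0 T)) (nhds 0) := squeeze_zero_norm' hb hScont
    have h4 := h3.add_const (lamMin (m t₀))
    simpa using h4
  -- Gronwall
  have key : ∀ ε : ℝ, 0 < ε → ε < lam0 → ∀ s ∈ Set.Icc (0:ℝ) T,
      (lam0 - ε) * Real.exp (-((c+ε)*s)) ≤ lamMin (m s) := by
    intro ε hε hepslam
    by_contra hcon
    push_neg at hcon
    obtain ⟨s₀, hs₀, hlt⟩ := hcon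
    set φ : ℝ → ℝ := fun u => (lam0 - ε) * Real.exp (-((c+ε)*u)) with hφdef
    set Bs : Set ℝ := {u | u ∈ Set.Icc (0:ℝ) T ∧ lamMin (m u) < φ u} with hBs
    have hBne : Bs.Nonempty := ⟨s₀, hs₀, hlt⟩
    have hBbdd : BddBelow Bs := ⟨0, fun u hu => hu.1.1⟩
    set t₁ := sInf Bs with ht₁def
    have ht₁0 : 0 ≤ t₁ := le_csInf hBne fun u hu => hu.1.1
    have ht₁T : t₁ ≤ T := le_trans (csInf_le hBbdd ⟨hs₀, hlt⟩) hs₀.2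
    have ht₁mem : t₁ ∈ Set.Icc (0:ℝ) T := ⟨ht₁0, ht₁T⟩
    have hφcont : Continuous φ := by
      apply Continuous.mul continuous_const
      exact Real.continuous_exp.comp (by continuity)
    have hψφ : Filter.Tendsto (fun u => lamMin (m u) - φ u) (nhdsWithin t₁ (Set.Icc 0 T))
        (nhds (lamMin (m t₁) - φ t₁)) :=
      (hψc t₁ ht₁mem).sub ((hφcont.tendsto t₁).mono_left nhdsWithin_le_nhds)
    have hA1 : lamMin (m t₁) ≤ φ t₁ := by
      by_contra h
      push_neg at h
      have h2 : ∀ᶠ u in nhdsWithin t₁ (Set.Icc 0 T), 0 < lamMin (m u) - φ u :=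
        hψφ.eventually (eventually_gt_nhds (by linarith))
      obtain ⟨O, hOopen, hOt₁, hOsub⟩ := mem_nhdsWithin.mp h2
      obtain ⟨δ, hδ, hball⟩ := Metric.isOpen_iff.mp hOopen t₁ hOt₁
      obtain ⟨b, hbB, hbδ⟩ := (csInf_lt_iff hBbdd hBne).mp
        (show sInf Bs < t₁ + δ by rw [← ht₁def]; linarith)
      have hbt₁ : t₁ ≤ b := csInf_le hBbdd hbB
      have hbO : b ∈ O := hball (by
        rw [Real.ball_eq_Ioo]
        exact ⟨by linarith, by linarith⟩)
      have := hOsub ⟨hbO, hbB.1⟩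
      have := hbB.2
      simp only [Set.mem_setOf_eq] at *
      linarith
    have hB1 : φ t₁ ≤ lamMin (m t₁) := by
      by_contra h
      push_neg at h
      rcases eq_or_lt_of_le ht₁0 with heq0 | hpos
      · rw [← heq0] at h
        have hφ0 : φ 0 = lam0 - ε := by simp [hφdef]
        rw [hφ0] at h
        linarith
      · have h2 : ∀ᶠ u in nhdsWithin t₁ (Set.Icc 0 T), lamMin (m u) - φ u < 0 :=
          hψφ.eventually (eventually_lt_nhds (by linarith))
        obtain ⟨O, hOopen, hOt₁, hOsub⟩ := mem_nhdsWithin.mp h2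
        obtain ⟨δ, hδ, hball⟩ := Metric.isOpen_iff.mp hOopen t₁ hOt₁
        set u := max (t₁ - δ/2) 0 with hu
        have hu0 : 0 ≤ u := le_max_right _ _
        have hut₁ : u < t₁ := by
          rw [hu]
          apply max_lt (by linarith) hpos
        have humem : u ∈ Set.Icc (0:ℝ) T := ⟨hu0, by linarith⟩
        have huO : u ∈ O := hball (by
          rw [Real.ball_eq_Ioo]
          constructor
          · have : t₁ - δ/2 ≤ u := le_max_left _ _
            linarith
          · linarith)
        have h3 := hOsub ⟨huO, humem⟩
        simp only [Set.mem_setOf_eq] at h3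
        have h4 : u ∈ Bs := ⟨humem, by linarith⟩
        have := csInf_le hBbdd h4
        rw [← ht₁def] at this
        linarith
    have heq : lamMin (m t₁) = φ t₁ := le_antisymm hA1 hB1
    have ht₁pos : 0 < t₁ := by
      rcases eq_or_lt_of_le ht₁0 with heq0 | h
      · exfalso
        rw [← heq0] at heq
        have hφ0 : φ 0 = lam0 - ε := by simp [hφdef]
        rw [hφ0] at heq
        rw [← heq0] at ht₁mem
        linarith [heq]
      · exact h
    have hlampos : 0 < φ t₁ := mul_pos (by linarith) (Real.exp_pos _)
    obtain ⟨v, hv1, hev⟩ := exists_eigvec hn (hherm t₁ ht₁mem)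
    rw [heq] at hev
    have hpsd : ∀ w, 0 ≤ (star w ⬝ᵥ (m t₁ *ᵥ w)).re := by
      intro w
      have h1 := rayleigh_ge (hherm t₁ ht₁mem) w
      have h2 : 0 ≤ lamMin (m t₁) * sqn w := by
        rw [heq]
        exact mul_nonneg hlampos.le (sqn_nonneg w)
      exact le_trans h2 h1
    have hf : HasDerivAt (fun u => (star v ⬝ᵥ (m u *ᵥ v)).re)
        ((star v ⬝ᵥ (lindRHS H L A (m t₁) *ᵥ v)).re) t₁ :=
      hasDerivAt_dot (hderiv t₁ ht₁mem) v
    have hdge : -(φ t₁ * c) ≤ (star v ⬝ᵥ (lindRHS H L A (m t₁) *ᵥ v)).re := by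
      rw [hc]
      exact rhs_key H L A (hherm t₁ ht₁mem) hlampos.le hv1 hev hpsd
    have hφ' : HasDerivAt φ (-(c+ε) * φ t₁) t₁ := by
      have h1 : HasDerivAt (fun u : ℝ => -((c+ε)*u)) (-(c+ε)) t₁ := by
        have h := ((hasDerivAt_id t₁).const_mul (c+ε)).neg
        simp only [mul_one] at h
        exact h
      have h2 := (h1.exp).const_mul (lam0 - ε)
      refine h2.congr_deriv ?_
      rw [hφdef]
      ring
    have hg' : HasDerivAt (fun u => (star v ⬝ᵥ (m u *ᵥ v)).re - φ u)
        ((star v ⬝ᵥ (lindRHS H L A (m t₁) *ᵥ v)).re - (-(c+ε) * φ t₁)) t₁ := hf.sub hφ'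
    set d := (star v ⬝ᵥ (lindRHS H L A (m t₁) *ᵥ v)).re - (-(c+ε) * φ t₁) with hd
    have hgpos : 0 < d := by
      have h9 : -(c+ε) * φ t₁ = -(φ t₁ * c) - ε * φ t₁ := by ring
      have h10 : 0 < ε * φ t₁ := mul_pos hε hlampos
      rw [hd, h9]
      linarith
    set g := fun u => (star v ⬝ᵥ (m u *ᵥ v)).re - φ u with hg
    have hg0 : g t₁ = 0 := by
      have h1 : qf (m t₁) v = φ t₁ := qf_eigvec hv1 hev
      rw [hg]
      simp only []
      rw [show (star v ⬝ᵥ (m t₁ *ᵥ v)).re = qf (m t₁) v from rfl, h1, sub_self]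
    have hgnn : ∀ u ∈ Set.Icc (0:ℝ) T, u < t₁ → 0 ≤ g u := by
      intro u hu hu2
      have h1 := rayleigh_ge (hherm u hu) v
      rw [hv1, mul_one] at h1
      have h2 : φ u ≤ lamMin (m u) := by
        by_contra hcc
        push_neg at hcc
        have := csInf_le hBbdd (⟨hu, hcc⟩ : u ∈ Bs)
        rw [← ht₁def] at this
        linarith
      have h3 : qf (m u) v = (star v ⬝ᵥ (m u *ᵥ v)).re := rfl
      rw [hg]
      simp only []
      linarith [h1, h2, h3 ▸ h1]
    have hder := (hg'.hasDerivWithinAt (s := Set.Iio t₁))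
    rw [hasDerivWithinAt_iff_tendsto_slope] at hder
    have hne : (Set.Iio t₁ \ {t₁}) = Set.Iio t₁ :=
      Set.diff_singleton_eq_self (fun hmem => lt_irrefl t₁ hmem)
    rw [hne] at hder
    have hev1 : ∀ᶠ u in nhdsWithin t₁ (Set.Iio t₁), 0 < slope g t₁ u :=
      hder.eventually (eventually_gt_nhds hgpos)
    have hev2 : ∀ᶠ u in nhdsWithin t₁ (Set.Iio t₁), 0 < u :=
      Filter.Eventually.filter_mono nhdsWithin_le_nhds (eventually_gt_nhds ht₁pos)
    have hev3 : ∀ᶠ u in nhdsWithin t₁ (Set.Iio t₁), u < t₁ := by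
      filter_upwards [self_mem_nhdsWithin] with u hu
      exact hu
    obtain ⟨u, h1, h2, h3⟩ := (hev1.and (hev2.and hev3)).exists
    have hu2 : u ∈ Set.Icc (0:ℝ) T := ⟨h2.le, by linarith⟩
    have hgu : 0 ≤ g u := hgnn u hu2 h3
    rw [slope_def_field, hg0, sub_zero] at h1
    have hneg : u - t₁ < 0 := by linarith
    have hnp : g u / (u - t₁) ≤ 0 := div_nonpos_of_nonneg_of_nonpos hgu hneg.le
    linarith
  -- limit ε → 0
  have hlower : ∀ s ∈ Set.Icc (0:ℝ) T, lam0 * Real.exp (-(c*s)) ≤ lamMin (m s) := by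
    intro s hs
    have hcont : Continuous (fun ε : ℝ => (lam0 - ε) * Real.exp (-((c+ε)*s))) := by
      apply Continuous.mul (by continuity)
      exact Real.continuous_exp.comp (by continuity)
    have htend : Filter.Tendsto (fun ε : ℝ => (lam0 - ε) * Real.exp (-((c+ε)*s)))
        (nhdsWithin 0 (Set.Ioi 0)) (nhds (lam0 * Real.exp (-(c*s)))) := by
      have h1 := hcont.tendsto 0
      have h2 : (lam0 - 0) * Real.exp (-((c+0)*s)) = lam0 * Real.exp (-(c*s)) := by norm_num
      rw [h2] at h1
      exact h1.mono_left nhdsWithin_le_nhds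
    refine le_of_tendsto htend ?_
    filter_upwards [Ioo_mem_nhdsGT_of_mem (Set.left_mem_Ico.mpr hlam0pos)] with ε hε
    exact key ε hε.1 hε.2 s hs
  -- final bound
  intro t ht
  have hMt : (m t).IsHermitian := hherm t ht
  have hψt : lam0 * Real.exp (-(c*t)) ≤ lamMin (m t) := hlower t ht
  have hψpos : 0 < lamMin (m t) :=
    lt_of_lt_of_le (mul_pos hlam0pos (Real.exp_pos _)) hψt
  have heigpos : ∀ i, 0 < hMt.eigenvalues i := fun i =>
    lt_of_lt_of_le hψpos (lamMin_le_eig hMt i)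
  have heigle1 : ∀ i, hMt.eigenvalues i ≤ 1 := eig_le_one hMt (htrace t ht) heigpos
  have hC0 : 0 ≤ -Real.log lam0 + c * T := by
    have h1 : Real.log lam0 ≤ 0 := Real.log_nonpos hlam0pos.le hlam0le1
    have h2 : 0 ≤ c * T := mul_nonneg hc0 hT
    linarith
  rw [mlog]
  refine opNorm_cfc_le hMt hC0 Real.log fun i => ?_
  have h1 : Real.log (hMt.eigenvalues i) ≤ 0 :=
    Real.log_nonpos (heigpos i).le (heigle1 i)
  have h3 : Real.log (lam0 * Real.exp (-(c*t))) ≤ Real.log (hMt.eigenvalues i) :=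
    Real.log_le_log (mul_pos hlam0pos (Real.exp_pos _))
      (le_trans hψt (lamMin_le_eig hMt i))
  rw [Real.log_mul (ne_of_gt hlam0pos) (Real.exp_ne_zero _), Real.log_exp] at h3
  have h4 : c * t ≤ c * T := mul_le_mul_of_nonneg_left ht.2 hc0
  rw [abs_of_nonpos h1]
  linarith
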